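/- The 3×4 real matrix [[τξ₁, τξ₃ᵖ, τξ₁, −τξ₃ᵖ], [2μ_sξ₁² − ρ_sτ², 2μ_sξ₁ξ₃ᵖ, 2μ_sξ₁² − ρ_sτ², −2μ_sξ₁ξ₃ᵖ], [2μ_sξ₁ξ₃ˢ, −2μ_sξ₁² + ρ_sτ², −2μ_sξ₁ξ₃ˢ, −2μ_sξ₁² + ρ_sτ²]] has rank 3, i.e. the linear map ℝ⁴ → ℝ³ it defines is surjective. (Consequently, in the hyperbolic-hyperbolic region any acoustic wave configuration in the fluid can be produced by suitable incoming and outgoing elastic waves in the solid.) -/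

import Mathlib

/-- The 3×4 control matrix in the hyperbolic-hyperbolic region has
rank 3, i.e. defines a surjective linear map ℝ⁴ → ℝ³. -/
theorem control_fluid_from_solid_hyperbolic_hyperbolic
    (lams mus rhos lamf rhof : ℝ)
    (hlams : 0 < lams) (hmus : 0 < mus) (hrhos : 0 < rhos)
    (hlamf : 0 < lamf) (hrhof : 0 < rhof)
    (cs cp cf : ℝ)
    (hcs : cs = Real.sqrt (mus / rhos))
    (hcp : cp = Real.sqrt ((lams + 2 * mus) / rhos))
    (hcf : cf = Real.sqrt (lamf / rhof))
    (ξ1 τ : ℝ) (hτ : τ ≠ 0)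
    (hhp : cp ^ 2 * ξ1 ^ 2 < τ ^ 2)
    (hhf : cf ^ 2 * ξ1 ^ 2 < τ ^ 2)
    (ξ3s ξ3p ξ3f : ℝ)
    (hξ3s : ξ3s = Real.sqrt (τ ^ 2 / cs ^ 2 - ξ1 ^ 2))
    (hξ3p : ξ3p = Real.sqrt (τ ^ 2 / cp ^ 2 - ξ1 ^ 2))
    (hξ3f : ξ3f = Real.sqrt (τ ^ 2 / cf ^ 2 - ξ1 ^ 2))
    (B : Matrix (Fin 3) (Fin 4) ℝ)
    (hB : B = !![τ * ξ1, τ * ξ3p, τ * ξ1, -(τ * ξ3p);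
                 2 * mus * ξ1 ^ 2 - rhos * τ ^ 2, 2 * mus * ξ1 * ξ3p,
                   2 * mus * ξ1 ^ 2 - rhos * τ ^ 2, -(2 * mus * ξ1 * ξ3p);
                 2 * mus * ξ1 * ξ3s, -(2 * mus * ξ1 ^ 2) + rhos * τ ^ 2,
                   -(2 * mus * ξ1 * ξ3s), -(2 * mus * ξ1 ^ 2) + rhos * τ ^ 2]) :
    B.rank = 3 ∧ Function.Surjective B.mulVec := by
  -- basic positivity facts
  have hcp2 : cp ^ 2 = (lams + 2 * mus) / rhos := by
    rw [hcp, Real.sq_sqrt (by positivity)]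
  have h1 : (lams + 2 * mus) * ξ1 ^ 2 < rhos * τ ^ 2 := by
    rw [hcp2] at hhp
    rw [div_mul_eq_mul_div, div_lt_iff₀ hrhos] at hhp
    linarith [hhp]
  have hA : 2 * mus * ξ1 ^ 2 - rhos * τ ^ 2 < 0 := by
    nlinarith [mul_nonneg hlams.le (sq_nonneg ξ1)]
  have hcp0 : 0 < cp := by rw [hcp]; positivity
  have hξ3p0 : 0 < ξ3p := by
    rw [hξ3p]
    apply Real.sqrt_pos.mpr
    rw [sub_pos, lt_div_iff₀ (by positivity)]
    nlinarith [hhp]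
  -- the invertible 3×3 submatrix (columns 0,1,3)
  set M : Matrix (Fin 3) (Fin 3) ℝ :=
    !![τ * ξ1, τ * ξ3p, -(τ * ξ3p);
       2 * mus * ξ1 ^ 2 - rhos * τ ^ 2, 2 * mus * ξ1 * ξ3p, -(2 * mus * ξ1 * ξ3p);
       2 * mus * ξ1 * ξ3s, -(2 * mus * ξ1 ^ 2) + rhos * τ ^ 2,
         -(2 * mus * ξ1 ^ 2) + rhos * τ ^ 2] with hM
  have hdet : M.det = 2 * rhos * τ ^ 3 * ξ3p * (rhos * τ ^ 2 - 2 * mus * ξ1 ^ 2) := by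
    simp [hM, Matrix.det_fin_three]
    ring
  have hdet0 : M.det ≠ 0 := by
    rw [hdet]
    have : 0 < rhos * τ ^ 2 - 2 * mus * ξ1 ^ 2 := by linarith
    apply mul_ne_zero
    apply mul_ne_zero
    apply mul_ne_zero
    · positivity
    · exact pow_ne_zero _ hτ
    · exact hξ3p0.ne'
    · exact this.ne'
  have hsurj : Function.Surjective B.mulVec := by
    intro v
    set w : Fin 3 → ℝ := M⁻¹.mulVec v with hw
    refine ⟨![w 0, w 1, 0, w 2], ?_⟩
    have hMw : M.mulVec w = v := by
      rw [hw, Matrix.mulVec_mulVec, Matrix.mul_nonsing_inv _ (isUnit_iff_ne_zero.mpr hdet0), Matrix.one_mulVec]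
    have e0 := congrFun hMw 0
    have e1 := congrFun hMw 1
    have e2 := congrFun hMw 2
    simp [Matrix.mulVec, dotProduct, Fin.sum_univ_three, hM] at e0 e1 e2
    funext i
    fin_cases i <;>
      simp [hB, Matrix.mulVec, dotProduct, Fin.sum_univ_four] <;>
      linarith [e0, e1, e2]
  refine ⟨?_, hsurj⟩
  have : Function.Surjective B.mulVecLin := by
    exact hsurj
  rw [Matrix.rank, LinearMap.range_eq_top.mpr this, finrank_top]
  simp
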